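/- In R^3, let W_1 = span{e_2,e_3}, W_2 = span{e_1,e_3}, W_3 = span{e_1+e_2, e_3}, W_4 = span{e_1, e_2+e_3}, W_5 = span{e_2, e_1+e_3}, with orthogonal projections P_1,...,P_5. Then for every nonzero x ∈ R^3, span{P_i x}_{i=1}^5 = R^3; hence {W_i}_{i=1}^5 does phase retrieval. -/

import Mathlib

open scoped InnerProductSpace

noncomputable section

local notation "e₁" => EuclideanSpace.single (0 : Fin 3) (1 : ℝ)
local notation "e₂" => EuclideanSpace.single (1 : Fin 3) (1 : ℝ)
local notation "e₃" => EuclideanSpace.single (2 : Fin 3) (1 : ℝ)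

def Wsub : Fin 5 → Submodule ℝ (EuclideanSpace ℝ (Fin 3)) :=
  ![Submodule.span ℝ {e₂, e₃},
    Submodule.span ℝ {e₁, e₃},
    Submodule.span ℝ {e₁ + e₂, e₃},
    Submodule.span ℝ {e₁, e₂ + e₃},
    Submodule.span ℝ {e₂, e₁ + e₃}]

abbrev E3 := EuclideanSpace ℝ (Fin 3)

lemma proj_pair (v₁ v₂ x u : E3) (hu : u ∈ Submodule.span ℝ {v₁, v₂})
    (h1 : ⟪x - u, v₁⟫_ℝ = 0) (h2 : ⟪x - u, v₂⟫_ℝ = 0) :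
    (Submodule.orthogonalProjection (Submodule.span ℝ {v₁, v₂}) x : E3) = u := by
  apply Submodule.eq_starProjection_of_mem_of_inner_eq_zero hu
  intro w hw
  induction hw using Submodule.span_induction with
  | mem w hw => rcases hw with h | h <;> subst h <;> assumption
  | zero => simp
  | add a b _ _ ha hb => rw [inner_add_right, ha, hb, add_zero]
  | smul c a _ ha => rw [inner_smul_right, ha, mul_zero]

lemma mem_pair_comb (v₁ v₂ : E3) (c₁ c₂ : ℝ) :
    c₁ • v₁ + c₂ • v₂ ∈ Submodule.span ℝ {v₁, v₂} :=
  Submodule.add_mem _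
    (Submodule.smul_mem _ _ (Submodule.subset_span (Or.inl rfl)))
    (Submodule.smul_mem _ _ (Submodule.subset_span (Or.inr rfl)))

lemma W0eq : Wsub 0 = Submodule.span ℝ {e₂, e₃} := rfl
lemma W1eq : Wsub 1 = Submodule.span ℝ {e₁, e₃} := rfl
lemma W2eq : Wsub 2 = Submodule.span ℝ {e₁ + e₂, e₃} := rfl
lemma W3eq : Wsub 3 = Submodule.span ℝ {e₁, e₂ + e₃} := rfl
lemma W4eq : Wsub 4 = Submodule.span ℝ {e₂, e₁ + e₃} := rfl

lemma proj0 (x : E3) : (Submodule.orthogonalProjection (Wsub 0) x : E3) = x 1 • e₂ + x 2 • e₃ := by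
  rw [W0eq]
  apply proj_pair _ _ _ _ (mem_pair_comb _ _ _ _) <;>
  · simp [inner_sub_left, inner_add_left, inner_add_right, inner_smul_left,
      EuclideanSpace.inner_single_right, EuclideanSpace.inner_single_left]
    try ring

lemma proj1 (x : E3) : (Submodule.orthogonalProjection (Wsub 1) x : E3) = x 0 • e₁ + x 2 • e₃ := by
  rw [W1eq]
  apply proj_pair _ _ _ _ (mem_pair_comb _ _ _ _) <;>
  · simp [inner_sub_left, inner_add_left, inner_add_right, inner_smul_left,
      EuclideanSpace.inner_single_right, EuclideanSpace.inner_single_left]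
    try ring

lemma proj2 (x : E3) : (Submodule.orthogonalProjection (Wsub 2) x : E3)
    = ((x 0 + x 1)/2) • (e₁ + e₂) + x 2 • e₃ := by
  rw [W2eq]
  apply proj_pair _ _ _ _ (mem_pair_comb _ _ _ _) <;>
  · simp [inner_sub_left, inner_add_left, inner_add_right, inner_smul_left,
      EuclideanSpace.inner_single_right, EuclideanSpace.inner_single_left]
    try ring

lemma proj3 (x : E3) : (Submodule.orthogonalProjection (Wsub 3) x : E3)
    = x 0 • e₁ + ((x 1 + x 2)/2) • (e₂ + e₃) := by
  rw [W3eq]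
  apply proj_pair _ _ _ _ (mem_pair_comb _ _ _ _) <;>
  · simp [inner_sub_left, inner_add_left, inner_add_right, inner_smul_left,
      EuclideanSpace.inner_single_right, EuclideanSpace.inner_single_left]
    try ring

lemma proj4 (x : E3) : (Submodule.orthogonalProjection (Wsub 4) x : E3)
    = x 1 • e₂ + ((x 0 + x 2)/2) • (e₁ + e₃) := by
  rw [W4eq]
  apply proj_pair _ _ _ _ (mem_pair_comb _ _ _ _) <;>
  · simp [inner_sub_left, inner_add_left, inner_add_right, inner_smul_left,
      EuclideanSpace.inner_single_right, EuclideanSpace.inner_single_left]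
    try ring

lemma inner0 (x v : E3) : ⟪(Submodule.orthogonalProjection (Wsub 0) x : E3), v⟫_ℝ
    = x 1 * v 1 + x 2 * v 2 := by
  rw [proj0]
  simp [inner_add_left, inner_smul_left, EuclideanSpace.inner_single_left]

lemma inner1 (x v : E3) : ⟪(Submodule.orthogonalProjection (Wsub 1) x : E3), v⟫_ℝ
    = x 0 * v 0 + x 2 * v 2 := by
  rw [proj1]
  simp [inner_add_left, inner_smul_left, EuclideanSpace.inner_single_left]

lemma inner2 (x v : E3) : ⟪(Submodule.orthogonalProjection (Wsub 2) x : E3), v⟫_ℝ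
    = ((x 0 + x 1)/2) * (v 0 + v 1) + x 2 * v 2 := by
  rw [proj2]
  simp [inner_add_left, inner_add_right, inner_smul_left, EuclideanSpace.inner_single_left]
  ring

lemma inner3 (x v : E3) : ⟪(Submodule.orthogonalProjection (Wsub 3) x : E3), v⟫_ℝ
    = x 0 * v 0 + ((x 1 + x 2)/2) * (v 1 + v 2) := by
  rw [proj3]
  simp [inner_add_left, inner_add_right, inner_smul_left, EuclideanSpace.inner_single_left]
  ring

lemma inner4 (x v : E3) : ⟪(Submodule.orthogonalProjection (Wsub 4) x : E3), v⟫_ℝ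
    = x 1 * v 1 + ((x 0 + x 2)/2) * (v 0 + v 2) := by
  rw [proj4]
  simp [inner_add_left, inner_add_right, inner_smul_left, EuclideanSpace.inner_single_left]
  ring

lemma span_proj (x : E3) (hx : x ≠ 0) :
    Submodule.span ℝ
      (Set.range fun i : Fin 5 =>
        (Submodule.orthogonalProjection (Wsub i) x : E3)) = ⊤ := by
  rw [← Submodule.orthogonal_eq_bot_iff]
  rw [eq_bot_iff]
  intro v hv
  rw [Submodule.mem_bot]
  have hmem := (Submodule.mem_orthogonal _ v).1 hv
  have E : ∀ i : Fin 5, ⟪(Submodule.orthogonalProjection (Wsub i) x : E3), v⟫_ℝ = 0 := fun i =>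
    hmem _ (Submodule.subset_span ⟨i, rfl⟩)
  have E0 := E 0; have E1 := E 1; have E2 := E 2; have E3' := E 3; have E4 := E 4
  rw [inner0] at E0; rw [inner1] at E1; rw [inner2] at E2
  rw [inner3] at E3'; rw [inner4] at E4
  set a := x 0 with ha'; set b := x 1 with hb'; set c := x 2 with hc'
  set p := v 0 with hp'; set q := v 1 with hq'; set r := v 2 with hr'
  have hx' : a ≠ 0 ∨ b ≠ 0 ∨ c ≠ 0 := by
    by_contra hcon
    push_neg at hcon
    apply hx
    ext j
    fin_cases j
    · exact hcon.1
    · exact hcon.2.1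
    · exact hcon.2.2
  have H6 : b * p + a * q = 0 := by linear_combination 2 * E2 - E0 - E1
  have H7 : 2 * a * p + c * q + b * r = 0 := by linear_combination 2 * E3' - E0
  have H8 : c * p + 2 * b * q + a * r = 0 := by linear_combination 2 * E4 - E1
  have hz : p = 0 ∧ q = 0 ∧ r = 0 := by
    by_cases hc : c = 0
    · by_cases hA : a = 0
      · have hB : b ≠ 0 := by
          rcases hx' with h | h | h
          · exact absurd hA h
          · exact h
          · exact absurd hc h
        have hq0 : q = 0 := by
          have h' : b * q = 0 := by linear_combination E0 - r * hc
          exact (mul_eq_zero.1 h').resolve_left hB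
        have hp0 : p = 0 := by
          have h' : b * p = 0 := by linear_combination H6 - q * hA
          exact (mul_eq_zero.1 h').resolve_left hB
        have hr0 : r = 0 := by
          have h' : b * r = 0 := by linear_combination H7 - 2 * p * hA - q * hc
          exact (mul_eq_zero.1 h').resolve_left hB
        exact ⟨hp0, hq0, hr0⟩
      · have hp0 : p = 0 := by
          have h' : a * p = 0 := by linear_combination E1 - r * hc
          exact (mul_eq_zero.1 h').resolve_left hA
        have hq0 : q = 0 := by
          have h' : a * q = 0 := by linear_combination H6 - b * hp0
          exact (mul_eq_zero.1 h').resolve_left hA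
        have hr0 : r = 0 := by
          have h' : a * r = 0 := by
            linear_combination H8 - 2 * E0 - p * hc + 2 * r * hc
          exact (mul_eq_zero.1 h').resolve_left hA
        exact ⟨hp0, hq0, hr0⟩
    · by_cases hA : a = 0
      · by_cases hB : b = 0
        · have hr0 : r = 0 := by
            have h' : c * r = 0 := by linear_combination E1 - p * hA
            exact (mul_eq_zero.1 h').resolve_left hc
          have hq0 : q = 0 := by
            have h' : c * q = 0 := by linear_combination H7 - 2 * p * hA - r * hB
            exact (mul_eq_zero.1 h').resolve_left hc
          have hp0 : p = 0 := by
            have h' : c * p = 0 := by linear_combination H8 - 2 * q * hB - r * hA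
            exact (mul_eq_zero.1 h').resolve_left hc
          exact ⟨hp0, hq0, hr0⟩
        · have hs : a ^ 2 + b ^ 2 ≠ 0 := by positivity
          have hd : c * (a ^ 2 + b ^ 2) ≠ 0 := mul_ne_zero hc hs
          have hp0 : c * (a ^ 2 + b ^ 2) * p = 0 := by
            linear_combination (-(a*c)) * E0 + (a*c) * E1 + (b*c) * H6
          have hq0 : c * (a ^ 2 + b ^ 2) * q = 0 := by
            linear_combination (b*c) * E0 + (-(b*c)) * E1 + (a*c) * H6
          have hr0 : c * (a ^ 2 + b ^ 2) * r = 0 := by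
            linear_combination (a^2) * E0 + (b^2) * E1 + (-(a*b)) * H6
          exact ⟨(mul_eq_zero.1 hp0).resolve_left hd,
                 (mul_eq_zero.1 hq0).resolve_left hd,
                 (mul_eq_zero.1 hr0).resolve_left hd⟩
      · have hs : a ^ 2 + b ^ 2 ≠ 0 := by positivity
        have hd : c * (a ^ 2 + b ^ 2) ≠ 0 := mul_ne_zero hc hs
        have hp0 : c * (a ^ 2 + b ^ 2) * p = 0 := by
          linear_combination (-(a*c)) * E0 + (a*c) * E1 + (b*c) * H6
        have hq0 : c * (a ^ 2 + b ^ 2) * q = 0 := by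
          linear_combination (b*c) * E0 + (-(b*c)) * E1 + (a*c) * H6
        have hr0 : c * (a ^ 2 + b ^ 2) * r = 0 := by
          linear_combination (a^2) * E0 + (b^2) * E1 + (-(a*b)) * H6
        exact ⟨(mul_eq_zero.1 hp0).resolve_left hd,
               (mul_eq_zero.1 hq0).resolve_left hd,
               (mul_eq_zero.1 hr0).resolve_left hd⟩
  ext j
  fin_cases j
  · exact hz.1
  · exact hz.2.1
  · exact hz.2.2

lemma normsq_diff (K : Submodule ℝ E3) (x y : E3) :
    ⟪(Submodule.orthogonalProjection K (x + y) : E3), x - y⟫_ℝ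
      = ‖(Submodule.orthogonalProjection K x : E3)‖ ^ 2 - ‖(Submodule.orthogonalProjection K y : E3)‖ ^ 2 := by
  have key : ∀ z : E3, ⟪(Submodule.orthogonalProjection K z : E3), z⟫_ℝ
      = ‖(Submodule.orthogonalProjection K z : E3)‖ ^ 2 := by
    intro z
    have h₁ := Submodule.sub_starProjection_mem_orthogonal (K := K) z
    have h₂ : ⟪(Submodule.orthogonalProjection K z : E3), z - (Submodule.orthogonalProjection K z : E3)⟫_ℝ = 0 :=
      h₁ _ (Submodule.orthogonalProjection K z).2
    have h₃ : ⟪(Submodule.orthogonalProjection K z : E3), z⟫_ℝ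
        = ⟪(Submodule.orthogonalProjection K z : E3), (Submodule.orthogonalProjection K z : E3)⟫_ℝ := by
      rw [inner_sub_right] at h₂; linarith
    rw [h₃, real_inner_self_eq_norm_sq]
  have hadd : (Submodule.orthogonalProjection K (x + y) : E3)
      = (Submodule.orthogonalProjection K x : E3) + (Submodule.orthogonalProjection K y : E3) := by
    rw [map_add]; rfl
  have hswap : ⟪(Submodule.orthogonalProjection K y : E3), x⟫_ℝ
      = ⟪(Submodule.orthogonalProjection K x : E3), y⟫_ℝ := by
    exact (K.inner_starProjection_left_eq_right y x).trans (real_inner_comm _ _)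
  rw [hadd, inner_add_left, inner_sub_right, inner_sub_right]
  rw [← key x, ← key y]
  linarith [hswap]

theorem Wsub_projections_span_and_phase_retrieval :
    (∀ x : EuclideanSpace ℝ (Fin 3), x ≠ 0 →
      Submodule.span ℝ
        (Set.range fun i : Fin 5 =>
          ((Wsub i).orthogonalProjection x : EuclideanSpace ℝ (Fin 3))) = ⊤) ∧
    (∀ x y : EuclideanSpace ℝ (Fin 3),
      (∀ i, ‖((Wsub i).orthogonalProjection x : EuclideanSpace ℝ (Fin 3))‖
        = ‖((Wsub i).orthogonalProjection y : EuclideanSpace ℝ (Fin 3))‖) →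
      x = y ∨ x = -y) := by
  refine ⟨span_proj, ?_⟩
  intro x y h
  rcases eq_or_ne (x + y) 0 with hu | hu
  · exact Or.inr (eq_neg_of_add_eq_zero_left hu)
  · left
    have hspan := span_proj (x + y) hu
    have hkey : ∀ i : Fin 5,
        ⟪(Submodule.orthogonalProjection (Wsub i) (x + y) : E3), x - y⟫_ℝ = 0 := by
      intro i
      rw [normsq_diff, h i, sub_self]
    have hmem : x - y ∈ (Submodule.span ℝ
        (Set.range fun i : Fin 5 => (Submodule.orthogonalProjection (Wsub i) (x + y) : E3)))ᗮ := by
      rw [Submodule.mem_orthogonal]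
      intro w hw
      induction hw using Submodule.span_induction with
      | mem w hw => obtain ⟨i, rfl⟩ := hw; exact hkey i
      | zero => simp
      | add a b _ _ ha hb => rw [inner_add_left, ha, hb, add_zero]
      | smul c a _ ha => rw [inner_smul_left, ha, mul_zero]
    rw [hspan, Submodule.top_orthogonal_eq_bot, Submodule.mem_bot, sub_eq_zero] at hmem
    exact hmem

end
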